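/- Let d(p,q) = ‖p - q‖ be the Euclidean distance on ℝ², and fix distinct points p, q and a real constant t with |t| ≤ ‖p - q‖. Then the level set {z ∈ ℝ² : ‖p - z‖ - ‖q - z‖ = t} is a connected subset of ℝ² (a branch of a hyperbola with foci p and q, or the perpendicular bisector, or a ray). -/

import Mathlib

lemma sqrt_eq_of (X Y : ℝ) (hY : 0 ≤ Y) (h : Y^2 = X) : Real.sqrt X = Y := by
  rw [← h, Real.sqrt_sq hY]

lemma claimA (c t y : ℝ) (hc : 0 < c) (ht0 : 0 ≤ t) (ht : t < 2*c) :
    Real.sqrt ((Real.sqrt ((t/2)^2 + ((t/2)^2/(c^2-(t/2)^2))*y^2) + c)^2 + y^2)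
    - Real.sqrt ((Real.sqrt ((t/2)^2 + ((t/2)^2/(c^2-(t/2)^2))*y^2) - c)^2 + y^2) = t := by
  rcases eq_or_lt_of_le ht0 with h0 | htpos
  · subst h0
    norm_num
  · set a := t/2 with ha
    have hb2 : 0 < c^2 - a^2 := by nlinarith
    have hapos : 0 < a := by positivity
    have hac : a < c := by nlinarith
    set h := Real.sqrt (a^2 + (a^2/(c^2-a^2))*y^2) with hh
    have hsq : h^2 = a^2 + (a^2/(c^2-a^2))*y^2 := Real.sq_sqrt (by positivity)
    have hsq' : (c^2-a^2)*h^2 = (c^2-a^2)*a^2 + a^2*y^2 := by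
      rw [hsq]; field_simp
    have hha : a ≤ h := by
      rw [hh]
      have h0 : 0 ≤ a^2/(c^2-a^2)*y^2 := by positivity
      calc a = Real.sqrt (a^2) := (Real.sqrt_sq hapos.le).symm
      _ ≤ _ := Real.sqrt_le_sqrt (by linarith)
    have e1 : Real.sqrt ((h + c)^2 + y^2) = (c/a)*h + a := by
      apply sqrt_eq_of _ _ (by positivity)
      field_simp
      linear_combination hsq'
    have e2 : Real.sqrt ((h - c)^2 + y^2) = (c/a)*h - a := by
      apply sqrt_eq_of _ _ ?_
      · field_simp
        linear_combination hsq'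
      · have : c ≤ (c/a)*h := by
          rw [div_mul_eq_mul_div, le_div_iff₀ hapos]
          nlinarith
        linarith
    rw [e1, e2]; ring

lemma claimB (c t x y : ℝ) (hc : 0 < c) (ht0 : 0 ≤ t) (ht : t < 2*c)
    (hyp : Real.sqrt ((x+c)^2+y^2) - Real.sqrt ((x-c)^2+y^2) = t) :
    x = Real.sqrt ((t/2)^2 + ((t/2)^2/(c^2-(t/2)^2))*y^2) := by
  have h1 : (Real.sqrt ((x+c)^2+y^2))^2 = (x+c)^2+y^2 := Real.sq_sqrt (by positivity)
  have h2 : (Real.sqrt ((x-c)^2+y^2))^2 = (x-c)^2+y^2 := Real.sq_sqrt (by positivity)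
  have h2n : 0 ≤ Real.sqrt ((x-c)^2+y^2) := Real.sqrt_nonneg _
  rcases eq_or_lt_of_le ht0 with h0 | htpos
  · subst h0
    have hr : Real.sqrt ((x+c)^2+y^2) = Real.sqrt ((x-c)^2+y^2) := by linarith
    have hx : x = 0 := by nlinarith [hr ▸ h1]
    norm_num [hx]
  · have hb2 : 0 < c^2 - (t/2)^2 := by nlinarith
    have hr1 : Real.sqrt ((x+c)^2+y^2) = Real.sqrt ((x-c)^2+y^2) + t := by linarith
    have key : 2*t*Real.sqrt ((x-c)^2+y^2) = 4*c*x - t^2 := by nlinarith [hr1 ▸ h1]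
    have hxpos : 0 < x := by nlinarith
    symm
    apply sqrt_eq_of _ _ hxpos.le
    have ht2 : t ≠ 0 := by positivity
    have this1 : (4*c*x - t^2)^2 = (2*t)^2 * ((x-c)^2+y^2) := by
      linear_combination (-(4*c*x - t^2 + 2*t*Real.sqrt ((x-c)^2+y^2)))*key + 4*t^2*h2
    have hx2 : x^2 * (4*c^2 - t^2) = t^2*c^2 - t^4/4 + t^2*y^2 := by
      linear_combination this1/4
    rw [div_mul_eq_mul_div, ← sub_eq_iff_eq_add', eq_div_iff hb2.ne']
    linear_combination hx2/4

lemma claimC (c x : ℝ) (hc : 0 < c) (hx : c ≤ x) :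
    Real.sqrt ((x+c)^2+(0:ℝ)^2) - Real.sqrt ((x-c)^2+(0:ℝ)^2) = 2*c := by
  rw [show (x+c)^2+(0:ℝ)^2 = (x+c)^2 by ring, show (x-c)^2+(0:ℝ)^2 = (x-c)^2 by ring,
    Real.sqrt_sq (by linarith), Real.sqrt_sq (by linarith)]
  ring

lemma claimD (c x y : ℝ) (hc : 0 < c)
    (hyp : Real.sqrt ((x+c)^2+y^2) - Real.sqrt ((x-c)^2+y^2) = 2*c) :
    c ≤ x ∧ y = 0 := by
  have h1 : (Real.sqrt ((x+c)^2+y^2))^2 = (x+c)^2+y^2 := Real.sq_sqrt (by positivity)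
  have h2 : (Real.sqrt ((x-c)^2+y^2))^2 = (x-c)^2+y^2 := Real.sq_sqrt (by positivity)
  have h2n : 0 ≤ Real.sqrt ((x-c)^2+y^2) := Real.sqrt_nonneg _
  have hr1 : Real.sqrt ((x+c)^2+y^2) = Real.sqrt ((x-c)^2+y^2) + 2*c := by linarith
  have key : Real.sqrt ((x-c)^2+y^2) = x - c := by nlinarith [hr1 ▸ h1]
  have hxc : c ≤ x := by linarith [key ▸ h2n]
  have hy : y = 0 := by nlinarith [key ▸ h2]
  exact ⟨hxc, hy⟩

theorem aux_connected (p q : EuclideanSpace ℝ (Fin 2)) (hpq : p ≠ q)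
    (t : ℝ) (ht0 : 0 ≤ t) (ht : t ≤ dist p q) :
    IsConnected {z : EuclideanSpace ℝ (Fin 2) | dist p z - dist q z = t} := by
  have hd : 0 < dist p q := dist_pos.mpr hpq
  set d := dist p q with hdd
  set c := d/2 with hcc
  have hc : 0 < c := by positivity
  set u : EuclideanSpace ℝ (Fin 2) := d⁻¹ • (q - p) with hu
  have hnu : ‖u‖ = 1 := by
    rw [hu, norm_smul, norm_inv, Real.norm_eq_abs, abs_of_pos hd, ← dist_eq_norm', hdd]
    field_simp
    exact div_self hd.ne'
  have hu2 : (u 0)^2 + (u 1)^2 = 1 := by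
    have h := hnu
    rw [EuclideanSpace.norm_eq, Fin.sum_univ_two] at h
    have h2 := congrArg (fun s => s^2) h
    simp only [one_pow] at h2
    rw [Real.sq_sqrt (by positivity)] at h2
    simpa [Real.norm_eq_abs, sq_abs] using h2
  set w : EuclideanSpace ℝ (Fin 2) := (WithLp.equiv 2 (Fin 2 → ℝ)).symm ![-(u 1), u 0] with hw
  have hw0 : w 0 = -(u 1) := rfl
  have hw1 : w 1 = u 0 := rfl
  set m : EuclideanSpace ℝ (Fin 2) := p + c • u with hm
  have hqp : q - p = d • u := by
    rw [hu, smul_smul, mul_inv_cancel₀ hd.ne', one_smul]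
  have normcomb : ∀ α β : ℝ, ‖α • u + β • w‖ = Real.sqrt (α^2 + β^2) := by
    intro α β
    rw [EuclideanSpace.norm_eq, Fin.sum_univ_two]
    simp only [PiLp.add_apply, PiLp.smul_apply, smul_eq_mul, hw0, hw1,
      Real.norm_eq_abs, sq_abs]
    congr 1
    linear_combination (α^2 + β^2) * hu2
  have distp : ∀ x y : ℝ, dist p (m + x • u + y • w) = Real.sqrt ((x+c)^2 + y^2) := by
    intro x y
    rw [dist_eq_norm']
    have e : m + x • u + y • w - p = (x+c) • u + y • w := by
      rw [hm]; module
    rw [e, normcomb]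
  have distq : ∀ x y : ℝ, dist q (m + x • u + y • w) = Real.sqrt ((x-c)^2 + y^2) := by
    intro x y
    rw [dist_eq_norm']
    have e : m + x • u + y • w - q = (x-c) • u + y • w := by
      rw [hm]
      have : q = p + d • u := by rw [← hqp]; abel
      rw [this, hcc]
      module
    rw [e, normcomb]
  have spanning : ∀ z : EuclideanSpace ℝ (Fin 2), ∃ x y : ℝ, z = m + x • u + y • w := by
    intro z
    refine ⟨u 0 * (z - m) 0 + u 1 * (z - m) 1, -(u 1) * (z - m) 0 + u 0 * (z - m) 1, ?_⟩
    ext i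
    fin_cases i
    · show z 0 = (m + _ • u + _ • w) 0
      simp only [PiLp.add_apply, PiLp.smul_apply, PiLp.sub_apply, smul_eq_mul, hw0, hw1]
      linear_combination (m 0 - z 0) * hu2
    · show z 1 = (m + _ • u + _ • w) 1
      simp only [PiLp.add_apply, PiLp.smul_apply, PiLp.sub_apply, smul_eq_mul, hw0, hw1]
      linear_combination (m 1 - z 1) * hu2
  rcases eq_or_lt_of_le ht with hteq | htlt
  · -- t = dist p q : the set is a ray
    have ht2c : t = 2*c := by rw [hteq, hcc]; ring
    have hset : {z : EuclideanSpace ℝ (Fin 2) | dist p z - dist q z = t}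
        = (fun x : ℝ => m + x • u + (0:ℝ) • w) '' Set.Ici c := by
      ext z
      constructor
      · intro hz
        obtain ⟨x, y, rfl⟩ := spanning z
        rw [Set.mem_setOf_eq, distp, distq, ht2c] at hz
        obtain ⟨hxc, hy0⟩ := claimD c x y hc hz
        exact ⟨x, hxc, by rw [← hy0]⟩
      · rintro ⟨x, hx, rfl⟩
        rw [Set.mem_setOf_eq, distp, distq, ht2c]
        exact claimC c x hc hx
    rw [hset]
    apply IsConnected.image isConnected_Ici
    apply Continuous.continuousOn
    fun_prop
  · -- t < dist p q : hyperbola branch / perpendicular bisector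
    have ht2c : t < 2*c := by rw [hcc]; linarith
    set h : ℝ → ℝ := fun y => Real.sqrt ((t/2)^2 + ((t/2)^2/(c^2-(t/2)^2))*y^2) with hh
    have hset : {z : EuclideanSpace ℝ (Fin 2) | dist p z - dist q z = t}
        = Set.range (fun y : ℝ => m + h y • u + y • w) := by
      ext z
      constructor
      · intro hz
        obtain ⟨x, y, rfl⟩ := spanning z
        rw [Set.mem_setOf_eq, distp, distq] at hz
        have hx : x = h y := claimB c t x y hc ht0 ht2c hz
        refine ⟨y, ?_⟩
        show m + h y • u + y • w = m + x • u + y • w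
        rw [hx]
      · rintro ⟨y, rfl⟩
        rw [Set.mem_setOf_eq, distp, distq]
        exact claimA c t y hc ht0 ht2c
    rw [hset]
    apply isConnected_range
    have hch : Continuous h := by
      apply Real.continuous_sqrt.comp
      fun_prop
    fun_prop


theorem dist_difference_level_set_connected
    (p q : EuclideanSpace ℝ (Fin 2)) (hpq : p ≠ q)
    (t : ℝ) (ht : |t| ≤ dist p q) :
    IsConnected {z : EuclideanSpace ℝ (Fin 2) | dist p z - dist q z = t} := by
  rcases le_or_gt 0 t with h0 | h0
  · exact aux_connected p q hpq t h0 (by rwa [abs_of_nonneg h0] at ht)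
  · have hset : {z : EuclideanSpace ℝ (Fin 2) | dist p z - dist q z = t}
        = {z : EuclideanSpace ℝ (Fin 2) | dist q z - dist p z = -t} := by
      ext z
      simp only [Set.mem_setOf_eq]
      constructor <;> intro hz <;> linarith
    rw [hset]
    exact aux_connected q p hpq.symm (-t) (by linarith)
      (by rw [dist_comm]; rwa [abs_of_neg h0] at ht)
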